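/- arXiv:0811.3087 — 2 statements merged into one kernel-verified Lean document; each statement's English description precedes it below -/
import Mathlib

section
/- Let n ≥ 2. There exists a constant C > 0 depending only on n such that for every R ≥ 2 and every integer ν ≥ 1, the sum of ℓ + ℓ' over all pairs (ℓ,ℓ') of nonnegative integers satisfying R(1-2^{1-ν}) < 2ℓℓ' + (n-1)(ℓ+ℓ') < R(1-2^{-1-ν}) is at most C R² max(2^{-ν}, R^{-1/2}). -/
open Finset

private lemma countA (T : Finset ℕ) (d c a b : ℝ) (hd : 0 < d) (hab : a ≤ b)
    (h : ∀ j ∈ T, a < d * j + c ∧ d * j + c < b) :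
    (T.card : ℝ) ≤ (b - a) / d + 1 := by
  have hdiv : (0:ℝ) ≤ (b - a) / d := div_nonneg (by linarith) hd.le
  rcases T.eq_empty_or_nonempty with h0 | h0
  · simp [h0]; linarith
  · set j₀ := T.min' h0 with hj₀
    have hsub : T ⊆ Finset.Icc j₀ (j₀ + ⌊(b - a) / d⌋₊) := by
      intro j hj
      have h1 : j₀ ≤ j := T.min'_le j hj
      have h2 := (h j hj).2
      have h3 := (h j₀ (T.min'_mem h0)).1
      have h4 : ((j:ℝ) - (j₀:ℝ)) < (b - a) / d := by
        rw [lt_div_iff₀ hd]; nlinarith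
      have h5 : ((j - j₀ : ℕ) : ℝ) ≤ (b - a) / d := by
        rw [Nat.cast_sub h1]; linarith
      have h6 : j - j₀ ≤ ⌊(b - a) / d⌋₊ := Nat.le_floor h5
      exact Finset.mem_Icc.mpr ⟨h1, by omega⟩
    have hc := Finset.card_le_card hsub
    rw [Nat.card_Icc] at hc
    have h7 : (⌊(b - a) / d⌋₊ : ℝ) ≤ (b - a) / d := Nat.floor_le hdiv
    have h8 : T.card ≤ ⌊(b - a) / d⌋₊ + 1 := by omega
    calc (T.card : ℝ) ≤ (⌊(b - a) / d⌋₊ : ℝ) + 1 := by exact_mod_cast h8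
      _ ≤ (b - a) / d + 1 := by linarith

private lemma sumsq (M : ℕ) :
    ∑ m ∈ Finset.range M, (1:ℝ) / (2 * (m:ℝ) + 1) ^ 2 ≤ 2 := by
  have key : ∀ K : ℕ, ∑ m ∈ Finset.range K, (1:ℝ) / (2 * (m:ℝ) + 1) ^ 2
      ≤ 2 - 2 / (2 * (K:ℝ) + 1) := by
    intro K
    induction K with
    | zero => simp
    | succ K ih =>
      rw [Finset.sum_range_succ]
      have h1 : (0:ℝ) < 2 * (K:ℝ) + 1 := by positivity
      have h2 : (0:ℝ) < 2 * ((K:ℝ) + 1) + 1 := by positivity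
      have h3 : (1:ℝ) / (2 * (K:ℝ) + 1) ^ 2 ≤ 2 / (2 * (K:ℝ) + 1) - 2 / (2 * ((K:ℝ)+1) + 1) := by
        rw [div_sub_div _ _ (ne_of_gt h1) (ne_of_gt h2), div_le_div_iff₀ (by positivity) (by positivity)]
        nlinarith
      push_cast
      linarith
  have := key M
  have h4 : (0:ℝ) ≤ 2 / (2 * (M:ℝ) + 1) := by positivity
  linarith

set_option maxHeartbeats 1000000 in
/-- Let `n ≥ 2`.  There is a constant `C > 0`, depending only on `n`, such
that for every `R ≥ 2` and every integer `ν ≥ 1`, the sum of `ℓ + ℓ'` over all pairs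
`(ℓ,ℓ')` of nonnegative integers with
`R(1-2^{1-ν}) < 2ℓℓ' + (n-1)(ℓ+ℓ') < R(1-2^{-1-ν})` is at most
`C R² max(2^{-ν}, R^{-1/2})`.  (The sum over the — finite — set of such pairs is expressed
as the supremum over finite subsets of pairs satisfying the constraint; all terms are
nonnegative.) -/
theorem eigenvalue_band_counting
    (n : ℕ) (hn : 2 ≤ n) :
    ∃ C > (0 : ℝ), ∀ R : ℝ, 2 ≤ R → ∀ ν : ℕ, 1 ≤ ν →
      ∀ s : Finset (ℕ × ℕ),
        (∀ k ∈ s,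
          R * (1 - (2 : ℝ) ^ (1 - (ν : ℤ))) <
              2 * (k.1 : ℝ) * (k.2 : ℝ) + ((n : ℝ) - 1) * ((k.1 : ℝ) + (k.2 : ℝ)) ∧
            2 * (k.1 : ℝ) * (k.2 : ℝ) + ((n : ℝ) - 1) * ((k.1 : ℝ) + (k.2 : ℝ)) <
              R * (1 - (2 : ℝ) ^ (-1 - (ν : ℤ)))) →
        ∑ k ∈ s, ((k.1 : ℝ) + (k.2 : ℝ)) ≤
          C * R ^ 2 * max ((2 : ℝ) ^ (-(ν : ℤ))) (R ^ (-(1 / 2) : ℝ)) := by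
  refine ⟨20, by norm_num, ?_⟩
  intro R hR ν hν s hs
  have hR0 : (0:ℝ) < R := by linarith
  have hn1 : (1:ℝ) ≤ (n:ℝ) - 1 := by
    have : (2:ℝ) ≤ (n:ℝ) := by exact_mod_cast hn
    linarith
  set E : ℝ := (2:ℝ) ^ (-(ν:ℤ)) with hE
  have hE0 : 0 < E := by positivity
  set A : ℝ := R * (1 - (2 : ℝ) ^ (1 - (ν : ℤ))) with hA
  set B : ℝ := R * (1 - (2 : ℝ) ^ (-1 - (ν : ℤ))) with hB
  have h2a : (2:ℝ) ^ (1 - (ν:ℤ)) = 2 * E := by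
    rw [hE, show (1 - (ν:ℤ)) = 1 + -(ν:ℤ) by ring, zpow_add₀ (two_ne_zero)]
    norm_num
  have h2b : (2:ℝ) ^ (-1 - (ν:ℤ)) = E / 2 := by
    rw [hE, show (-1 - (ν:ℤ)) = -1 + -(ν:ℤ) by ring, zpow_add₀ (two_ne_zero)]
    norm_num
    ring
  have hD : B - A = 3 / 2 * R * E := by
    rw [hA, hB, h2a, h2b]; ring
  have hAB : A ≤ B := by nlinarith
  have hBR : B < R := by
    rw [hB, h2b]
    nlinarith
  -- every element has min ≤ ⌊√R⌋₊
  set M : ℕ := ⌊Real.sqrt R⌋₊ with hM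
  have hmaps : ∀ k ∈ s, min k.1 k.2 ∈ Finset.range (M + 1) := by
    intro k hk
    obtain ⟨h1, h2⟩ := hs k hk
    set m : ℕ := min k.1 k.2 with hm
    have hm1 : (m:ℝ) ≤ (k.1:ℝ) := by exact_mod_cast min_le_left k.1 k.2
    have hm2 : (m:ℝ) ≤ (k.2:ℝ) := by exact_mod_cast min_le_right k.1 k.2
    have hmn : (0:ℝ) ≤ (m:ℝ) := Nat.cast_nonneg m
    have hk1 : (0:ℝ) ≤ (k.1:ℝ) := by positivity
    have hk2 : (0:ℝ) ≤ (k.2:ℝ) := by positivity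
    have hsq : (m:ℝ) ^ 2 ≤ R := by
      have hmm : (m:ℝ) * (m:ℝ) ≤ (k.1:ℝ) * (k.2:ℝ) := mul_le_mul hm1 hm2 hmn hk1
      nlinarith [mul_nonneg (by linarith : (0:ℝ) ≤ (n:ℝ) - 1) (by linarith : (0:ℝ) ≤ (k.1:ℝ) + (k.2:ℝ))]
    have : (m:ℝ) ≤ Real.sqrt R := by
      have := Real.sqrt_le_sqrt hsq
      rwa [Real.sqrt_sq hmn] at this
    have hMle : m ≤ M := Nat.le_floor this
    exact Finset.mem_range.mpr (Nat.lt_succ_of_le hMle)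
  rw [← Finset.sum_fiberwise_of_maps_to hmaps (fun k => (k.1:ℝ) + (k.2:ℝ))]
  -- bound each fiber
  have fiber : ∀ m ∈ Finset.range (M + 1),
      ∑ k ∈ s.filter (fun k => min k.1 k.2 = m), ((k.1:ℝ) + (k.2:ℝ)) ≤
        4 * R * (B - A) * (1 / (2 * (m:ℝ) + 1) ^ 2) + 4 * R := by
    intro m _
    set t := s.filter (fun k => min k.1 k.2 = m) with ht
    have hm0 : (0:ℝ) < 2 * (m:ℝ) + 1 := by positivity
    -- each term bound
    have hterm : ∀ k ∈ t, ((k.1:ℝ) + (k.2:ℝ)) ≤ 2 * R / (2 * (m:ℝ) + 1) := by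
      intro k hk
      rw [ht, Finset.mem_filter] at hk
      obtain ⟨hks, hkm⟩ := hk
      obtain ⟨h1, h2⟩ := hs k hks
      have hlam : 2 * (k.1:ℝ) * (k.2:ℝ) + ((n:ℝ) - 1) * ((k.1:ℝ) + (k.2:ℝ)) < R := lt_trans h2 hBR
      rw [le_div_iff₀ hm0]
      rcases le_total k.1 k.2 with hle | hle
      · have : k.1 = m := by rw [← hkm]; exact (min_eq_left hle).symm
        have hcm : (m:ℝ) = (k.1:ℝ) := by exact_mod_cast congrArg Nat.cast this.symm
        have hcle : (k.1:ℝ) ≤ (k.2:ℝ) := by exact_mod_cast hle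
        nlinarith [(by positivity : (0:ℝ) ≤ (k.1:ℝ)), (by positivity : (0:ℝ) ≤ (k.2:ℝ)),
          mul_le_mul_of_nonneg_left hcle (by positivity : (0:ℝ) ≤ 2 * (k.1:ℝ)),
          mul_nonneg (by linarith : (0:ℝ) ≤ (n:ℝ) - 1 - 1)
            (by positivity : (0:ℝ) ≤ (k.1:ℝ) + (k.2:ℝ))]
      · have : k.2 = m := by rw [← hkm]; exact (min_eq_right hle).symm
        have hcm : (m:ℝ) = (k.2:ℝ) := by exact_mod_cast congrArg Nat.cast this.symm
        have hcle : (k.2:ℝ) ≤ (k.1:ℝ) := by exact_mod_cast hle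
        nlinarith [(by positivity : (0:ℝ) ≤ (k.1:ℝ)), (by positivity : (0:ℝ) ≤ (k.2:ℝ)),
          mul_le_mul_of_nonneg_left hcle (by positivity : (0:ℝ) ≤ 2 * (k.2:ℝ)),
          mul_nonneg (by linarith : (0:ℝ) ≤ (n:ℝ) - 1 - 1)
            (by positivity : (0:ℝ) ≤ (k.1:ℝ) + (k.2:ℝ))]
    -- cardinality bound
    have hd0 : (0:ℝ) < 2 * (m:ℝ) + ((n:ℝ) - 1) := by
      have : (0:ℝ) ≤ (m:ℝ) := by positivity
      linarith
    have hcard : (t.card : ℝ) ≤ 2 * ((B - A) / (2 * (m:ℝ) + 1) + 1) := by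
      have hsplit : (t.filter (fun k => k.1 ≤ k.2)).card
          + (t.filter (fun k => ¬ k.1 ≤ k.2)).card = t.card :=
        Finset.card_filter_add_card_filter_not _
      -- first half
      have hb1 : ((t.filter (fun k => k.1 ≤ k.2)).card : ℝ)
          ≤ (B - A) / (2 * (m:ℝ) + 1) + 1 := by
        set u := t.filter (fun k => k.1 ≤ k.2) with hu
        have hfst : ∀ k ∈ u, k.1 = m := by
          intro k hk
          rw [hu, Finset.mem_filter, ht, Finset.mem_filter] at hk
          have := hk.1.2
          have h' := hk.2
          omega
        have hinj : Set.InjOn Prod.snd (u : Set (ℕ × ℕ)) := by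
          intro k₁ hk₁ k₂ hk₂ heq
          have e1 := hfst k₁ hk₁
          have e2 := hfst k₂ hk₂
          exact Prod.ext (e1.trans e2.symm) heq
        have hcardeq : u.card = (u.image Prod.snd).card :=
          (Finset.card_image_of_injOn hinj).symm
        have hmem : ∀ j ∈ u.image Prod.snd,
            A < (2 * (m:ℝ) + ((n:ℝ) - 1)) * (j:ℝ) + ((n:ℝ) - 1) * (m:ℝ) ∧
            (2 * (m:ℝ) + ((n:ℝ) - 1)) * (j:ℝ) + ((n:ℝ) - 1) * (m:ℝ) < B := by
          intro j hj
          obtain ⟨k, hk, hkj⟩ := Finset.mem_image.mp hj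
          have hks : k ∈ s := by
            rw [hu, Finset.mem_filter, ht, Finset.mem_filter] at hk
            exact hk.1.1
          obtain ⟨h1, h2⟩ := hs k hks
          have e1 : (k.1:ℝ) = (m:ℝ) := by exact_mod_cast congrArg Nat.cast (hfst k hk)
          have e2 : (k.2:ℝ) = (j:ℝ) := by exact_mod_cast congrArg Nat.cast hkj
          constructor
          · calc A < 2 * (k.1:ℝ) * (k.2:ℝ) + ((n:ℝ) - 1) * ((k.1:ℝ) + (k.2:ℝ)) := h1
              _ = (2 * (m:ℝ) + ((n:ℝ) - 1)) * (j:ℝ) + ((n:ℝ) - 1) * (m:ℝ) := by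
                rw [e1, e2]; ring
          · calc (2 * (m:ℝ) + ((n:ℝ) - 1)) * (j:ℝ) + ((n:ℝ) - 1) * (m:ℝ)
                = 2 * (k.1:ℝ) * (k.2:ℝ) + ((n:ℝ) - 1) * ((k.1:ℝ) + (k.2:ℝ)) := by
                  rw [e1, e2]; ring
              _ < B := h2
        have := countA (u.image Prod.snd) (2 * (m:ℝ) + ((n:ℝ) - 1))
          (((n:ℝ) - 1) * (m:ℝ)) A B hd0 hAB hmem
        rw [← hcardeq] at this
        calc (u.card : ℝ) ≤ (B - A) / (2 * (m:ℝ) + ((n:ℝ) - 1)) + 1 := this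
          _ ≤ (B - A) / (2 * (m:ℝ) + 1) + 1 := by
            gcongr
      -- second half
      have hb2 : ((t.filter (fun k => ¬ k.1 ≤ k.2)).card : ℝ)
          ≤ (B - A) / (2 * (m:ℝ) + 1) + 1 := by
        set u := t.filter (fun k => ¬ k.1 ≤ k.2) with hu
        have hfst : ∀ k ∈ u, k.2 = m := by
          intro k hk
          rw [hu, Finset.mem_filter, ht, Finset.mem_filter] at hk
          have := hk.1.2
          have h' := hk.2
          omega
        have hinj : Set.InjOn Prod.fst (u : Set (ℕ × ℕ)) := by
          intro k₁ hk₁ k₂ hk₂ heq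
          have e1 := hfst k₁ hk₁
          have e2 := hfst k₂ hk₂
          exact Prod.ext heq (e1.trans e2.symm)
        have hcardeq : u.card = (u.image Prod.fst).card :=
          (Finset.card_image_of_injOn hinj).symm
        have hmem : ∀ j ∈ u.image Prod.fst,
            A < (2 * (m:ℝ) + ((n:ℝ) - 1)) * (j:ℝ) + ((n:ℝ) - 1) * (m:ℝ) ∧
            (2 * (m:ℝ) + ((n:ℝ) - 1)) * (j:ℝ) + ((n:ℝ) - 1) * (m:ℝ) < B := by
          intro j hj
          obtain ⟨k, hk, hkj⟩ := Finset.mem_image.mp hj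
          have hks : k ∈ s := by
            rw [hu, Finset.mem_filter, ht, Finset.mem_filter] at hk
            exact hk.1.1
          obtain ⟨h1, h2⟩ := hs k hks
          have e1 : (k.2:ℝ) = (m:ℝ) := by exact_mod_cast congrArg Nat.cast (hfst k hk)
          have e2 : (k.1:ℝ) = (j:ℝ) := by exact_mod_cast congrArg Nat.cast hkj
          constructor
          · calc A < 2 * (k.1:ℝ) * (k.2:ℝ) + ((n:ℝ) - 1) * ((k.1:ℝ) + (k.2:ℝ)) := h1
              _ = (2 * (m:ℝ) + ((n:ℝ) - 1)) * (j:ℝ) + ((n:ℝ) - 1) * (m:ℝ) := by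
                rw [e1, e2]; ring
          · calc (2 * (m:ℝ) + ((n:ℝ) - 1)) * (j:ℝ) + ((n:ℝ) - 1) * (m:ℝ)
                = 2 * (k.1:ℝ) * (k.2:ℝ) + ((n:ℝ) - 1) * ((k.1:ℝ) + (k.2:ℝ)) := by
                  rw [e1, e2]; ring
              _ < B := h2
        have := countA (u.image Prod.fst) (2 * (m:ℝ) + ((n:ℝ) - 1))
          (((n:ℝ) - 1) * (m:ℝ)) A B hd0 hAB hmem
        rw [← hcardeq] at this
        calc (u.card : ℝ) ≤ (B - A) / (2 * (m:ℝ) + ((n:ℝ) - 1)) + 1 := this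
          _ ≤ (B - A) / (2 * (m:ℝ) + 1) + 1 := by
            gcongr
      have : (t.card : ℝ) = ((t.filter (fun k => k.1 ≤ k.2)).card : ℝ)
          + ((t.filter (fun k => ¬ k.1 ≤ k.2)).card : ℝ) := by
        exact_mod_cast hsplit.symm
      rw [this]; linarith
    -- combine
    have hsum : ∑ k ∈ t, ((k.1:ℝ) + (k.2:ℝ)) ≤ t.card • (2 * R / (2 * (m:ℝ) + 1)) :=
      Finset.sum_le_card_nsmul t _ _ hterm
    rw [nsmul_eq_mul] at hsum
    have hw0 : (0:ℝ) ≤ 2 * R / (2 * (m:ℝ) + 1) := by positivity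
    have : (t.card : ℝ) * (2 * R / (2 * (m:ℝ) + 1))
        ≤ 2 * ((B - A) / (2 * (m:ℝ) + 1) + 1) * (2 * R / (2 * (m:ℝ) + 1)) :=
      mul_le_mul_of_nonneg_right hcard hw0
    have heq : 2 * ((B - A) / (2 * (m:ℝ) + 1) + 1) * (2 * R / (2 * (m:ℝ) + 1))
        = 4 * R * (B - A) * (1 / (2 * (m:ℝ) + 1) ^ 2) + 4 * R / (2 * (m:ℝ) + 1) := by
      field_simp
      ring
    have hlast : 4 * R / (2 * (m:ℝ) + 1) ≤ 4 * R := by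
      rw [div_le_iff₀ hm0]
      nlinarith [(by positivity : (0:ℝ) ≤ (m:ℝ))]
    calc ∑ k ∈ t, ((k.1:ℝ) + (k.2:ℝ)) ≤ (t.card : ℝ) * (2 * R / (2 * (m:ℝ) + 1)) := hsum
      _ ≤ 4 * R * (B - A) * (1 / (2 * (m:ℝ) + 1) ^ 2) + 4 * R / (2 * (m:ℝ) + 1) := by
          rw [← heq]; exact this
      _ ≤ 4 * R * (B - A) * (1 / (2 * (m:ℝ) + 1) ^ 2) + 4 * R := by linarith
  -- sum the fiber bounds
  have hDnn : (0:ℝ) ≤ B - A := by linarith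
  have step1 : ∑ m ∈ Finset.range (M + 1),
      (∑ k ∈ s.filter (fun k => min k.1 k.2 = m), ((k.1:ℝ) + (k.2:ℝ))) ≤
      ∑ m ∈ Finset.range (M + 1),
        (4 * R * (B - A) * (1 / (2 * (m:ℝ) + 1) ^ 2) + 4 * R) :=
    Finset.sum_le_sum fiber
  have step2 : ∑ m ∈ Finset.range (M + 1),
      (4 * R * (B - A) * (1 / (2 * (m:ℝ) + 1) ^ 2) + 4 * R)
      = 4 * R * (B - A) * (∑ m ∈ Finset.range (M + 1), 1 / (2 * (m:ℝ) + 1) ^ 2)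
        + ((M:ℝ) + 1) * (4 * R) := by
    rw [Finset.sum_add_distrib, ← Finset.mul_sum, Finset.sum_const, nsmul_eq_mul,
      Finset.card_range]
    push_cast
    ring
  have hsumsq := sumsq (M + 1)
  have hMR : ((M:ℝ) + 1) ≤ 2 * Real.sqrt R := by
    have h1 : (M:ℝ) ≤ Real.sqrt R := Nat.floor_le (Real.sqrt_nonneg R)
    have h2 : (1:ℝ) ≤ Real.sqrt R := by
      rw [show (1:ℝ) = Real.sqrt 1 by simp]
      exact Real.sqrt_le_sqrt (by linarith)
    linarith
  have hsqrt : Real.sqrt R * Real.sqrt R = R := Real.mul_self_sqrt hR0.le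
  have hfinal : 4 * R * (B - A) * (∑ m ∈ Finset.range (M + 1), 1 / (2 * (m:ℝ) + 1) ^ 2)
        + ((M:ℝ) + 1) * (4 * R) ≤ 12 * R ^ 2 * E + 8 * R * Real.sqrt R := by
    have h1 : 4 * R * (B - A) * (∑ m ∈ Finset.range (M + 1), 1 / (2 * (m:ℝ) + 1) ^ 2)
        ≤ 4 * R * (B - A) * 2 := by
      apply mul_le_mul_of_nonneg_left hsumsq
      positivity
    have h2 : 4 * R * (B - A) * 2 = 12 * R ^ 2 * E := by rw [hD]; ring
    have h3 : ((M:ℝ) + 1) * (4 * R) ≤ 8 * R * Real.sqrt R := by nlinarith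
    linarith
  have hbase : Real.sqrt R = R ^ ((1:ℝ)/2) := Real.sqrt_eq_rpow R
  have hkey : R * R ^ (-(1/2 : ℝ)) = R ^ ((1:ℝ)/2) := by
    nth_rewrite 1 [← Real.rpow_one R]
    rw [← Real.rpow_add hR0]
    norm_num
  have hrpow : R * Real.sqrt R = R ^ 2 * R ^ (-(1/2 : ℝ)) := by
    rw [hbase, ← hkey]; ring
  set X : ℝ := max E (R ^ (-(1/2 : ℝ))) with hX
  have hRsq : (0:ℝ) ≤ R ^ 2 := sq_nonneg R
  have t1 : 12 * R ^ 2 * E ≤ 12 * R ^ 2 * X :=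
    mul_le_mul_of_nonneg_left (le_max_left _ _) (by positivity)
  have t2 : 8 * R * Real.sqrt R ≤ 8 * R ^ 2 * X := by
    have h := le_max_right E (R ^ (-(1/2 : ℝ)))
    calc 8 * R * Real.sqrt R = 8 * (R ^ 2 * R ^ (-(1/2 : ℝ))) := by rw [← hrpow]; ring
      _ ≤ 8 * (R ^ 2 * X) := by
          apply mul_le_mul_of_nonneg_left _ (by norm_num : (0:ℝ) ≤ 8)
          exact mul_le_mul_of_nonneg_left h hRsq
      _ = 8 * R ^ 2 * X := by ring
  have hgoal : ∑ m ∈ Finset.range (M + 1),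
      (∑ k ∈ s.filter (fun k => min k.1 k.2 = m), ((k.1:ℝ) + (k.2:ℝ))) ≤ 20 * R ^ 2 * X := by
    calc ∑ m ∈ Finset.range (M + 1),
        (∑ k ∈ s.filter (fun k => min k.1 k.2 = m), ((k.1:ℝ) + (k.2:ℝ)))
        ≤ ∑ m ∈ Finset.range (M + 1),
          (4 * R * (B - A) * (1 / (2 * (m:ℝ) + 1) ^ 2) + 4 * R) := step1
      _ = 4 * R * (B - A) * (∑ m ∈ Finset.range (M + 1), 1 / (2 * (m:ℝ) + 1) ^ 2)
          + ((M:ℝ) + 1) * (4 * R) := step2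
      _ ≤ 12 * R ^ 2 * E + 8 * R * Real.sqrt R := hfinal
      _ ≤ 12 * R ^ 2 * X + 8 * R ^ 2 * X := by linarith
      _ = 20 * R ^ 2 * X := by ring
  exact hgoal
end

section
/- Let n ≥ 2 and let S^{2n-1} = {z ∈ ℂ^n : ⟨z,z⟩ = 1} be the unit sphere in ℂ^n. Then the function d(z,w) = |1 - ⟨z,w⟩|^{1/2} is a metric on S^{2n-1}: it is nonnegative, symmetric, vanishes exactly when z = w, and satisfies the triangle inequality d(z,w) ≤ d(z,u) + d(u,w) for all z, u, w ∈ S^{2n-1}. -/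
open ComplexConjugate

noncomputable section

/-- The unit sphere `S^{2n-1}` in `ℂⁿ`. -/
abbrev CSphere (n : ℕ) : Type := Metric.sphere (0 : EuclideanSpace ℂ (Fin n)) 1

/-- The Hermitian inner product `⟨z,w⟩ = ∑ z_j conj w_j` on `ℂⁿ`. -/
def herm {n : ℕ} (z w : EuclideanSpace ℂ (Fin n)) : ℂ := ∑ j, z j * (starRingEnd ℂ) (w j)

/-- The Koranyi distance `d(z,w) = |1 - ⟨z,w⟩|^{1/2}` on the sphere. -/
def kdist {n : ℕ} (z w : CSphere n) : ℝ :=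
  Real.sqrt ‖1 - herm (z : EuclideanSpace ℂ (Fin n)) (w : EuclideanSpace ℂ (Fin n))‖

lemma herm_eq_inner {n : ℕ} (z w : EuclideanSpace ℂ (Fin n)) :
    herm z w = @inner ℂ _ _ w z := by
  simp [herm, PiLp.inner_apply, RCLike.inner_apply, mul_comm]

lemma norm_coe_sphere {n : ℕ} (z : CSphere n) : ‖(z : EuclideanSpace ℂ (Fin n))‖ = 1 :=
  mem_sphere_zero_iff_norm.mp z.2

lemma herm_self {n : ℕ} (z : CSphere n) :
    herm (z : EuclideanSpace ℂ (Fin n)) (z : EuclideanSpace ℂ (Fin n)) = 1 := by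
  rw [herm_eq_inner, inner_self_eq_norm_sq_to_K, norm_coe_sphere]
  norm_num

/-- `‖z - u‖² ≤ 2 |1 - herm z u|` for points on the sphere. -/
lemma norm_sub_sq_le {n : ℕ} (z u : CSphere n) :
    ‖(z : EuclideanSpace ℂ (Fin n)) - u‖ ^ 2 ≤
      2 * ‖1 - herm (z : EuclideanSpace ℂ (Fin n)) u‖ := by
  have h : ‖(z : EuclideanSpace ℂ (Fin n)) - u‖ ^ 2 =
      2 - 2 * Complex.re (@inner ℂ _ _ (u : EuclideanSpace ℂ (Fin n)) z) := by
    rw [@norm_sub_sq ℂ, norm_coe_sphere, norm_coe_sphere]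
    have h2 : (@inner ℂ _ _ (z : EuclideanSpace ℂ (Fin n)) (u : EuclideanSpace ℂ (Fin n))).re =
        (@inner ℂ _ _ (u : EuclideanSpace ℂ (Fin n)) (z : EuclideanSpace ℂ (Fin n))).re := by
      rw [← inner_conj_symm, Complex.conj_re]
    simp only [RCLike.re_to_complex]
    rw [h2]; ring
  rw [h, herm_eq_inner]
  have hre : 1 - Complex.re (@inner ℂ _ _ (u : EuclideanSpace ℂ (Fin n)) z) ≤
      ‖1 - @inner ℂ _ _ (u : EuclideanSpace ℂ (Fin n)) z‖ := by
    calc 1 - Complex.re (@inner ℂ _ _ (u : EuclideanSpace ℂ (Fin n)) z)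
        = Complex.re (1 - @inner ℂ _ _ (u : EuclideanSpace ℂ (Fin n)) z) := by simp
      _ ≤ ‖1 - @inner ℂ _ _ (u : EuclideanSpace ℂ (Fin n)) z‖ :=
          Complex.re_le_norm _
  linarith

lemma norm_sub_le_sqrt_two_kdist {n : ℕ} (z u : CSphere n) :
    ‖(z : EuclideanSpace ℂ (Fin n)) - u‖ ≤ Real.sqrt 2 * kdist z u := by
  have h0 : ‖(z : EuclideanSpace ℂ (Fin n)) - u‖ =
      Real.sqrt (‖(z : EuclideanSpace ℂ (Fin n)) - u‖ ^ 2) :=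
    (Real.sqrt_sq (norm_nonneg _)).symm
  rw [h0, kdist, ← Real.sqrt_mul (by norm_num : (0:ℝ) ≤ 2)]
  exact Real.sqrt_le_sqrt (norm_sub_sq_le z u)

/-- `d(z,w) = |1 - ⟨z,w⟩|^{1/2}` is a metric on the unit sphere
`S^{2n-1} ⊆ ℂⁿ`: it is nonnegative, symmetric, vanishes exactly when `z = w`, and
satisfies the triangle inequality. -/
theorem kdist_is_metric (n : ℕ) (hn : 2 ≤ n) :
    (∀ z w : CSphere n, 0 ≤ kdist z w) ∧
    (∀ z w : CSphere n, kdist z w = kdist w z) ∧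
    (∀ z w : CSphere n, kdist z w = 0 ↔ z = w) ∧
    (∀ z u w : CSphere n, kdist z w ≤ kdist z u + kdist u w) := by
  refine ⟨fun z w => Real.sqrt_nonneg _, ?_, ?_, ?_⟩
  · intro z w
    unfold kdist
    congr 1
    rw [← Complex.norm_conj]
    congr 1
    rw [map_sub, map_one, herm_eq_inner, herm_eq_inner, inner_conj_symm]
  · intro z w
    unfold kdist
    rw [Real.sqrt_eq_zero (by positivity), norm_eq_zero, sub_eq_zero]
    rw [herm_eq_inner, eq_comm,
      inner_eq_one_iff_of_norm_eq_one (norm_coe_sphere w) (norm_coe_sphere z)]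
    constructor
    · intro h; exact Subtype.ext h.symm
    · intro h; exact congrArg _ h.symm
  · intro z u w
    set a := kdist z u with ha
    set b := kdist u w with hb
    have ha0 : 0 ≤ a := Real.sqrt_nonneg _
    have hb0 : 0 ≤ b := Real.sqrt_nonneg _
    have ha2 : ‖1 - herm (z : EuclideanSpace ℂ (Fin n)) u‖ = a ^ 2 := by
      rw [ha, kdist, Real.sq_sqrt (by positivity)]
    have hb2 : ‖1 - herm (u : EuclideanSpace ℂ (Fin n)) w‖ = b ^ 2 := by
      rw [hb, kdist, Real.sq_sqrt (by positivity)]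
    -- key identity
    have key : (1 : ℂ) - herm (z : EuclideanSpace ℂ (Fin n)) w =
        (1 - herm (z : EuclideanSpace ℂ (Fin n)) u) + (1 - herm (u : EuclideanSpace ℂ (Fin n)) w)
        + @inner ℂ _ _ ((u : EuclideanSpace ℂ (Fin n)) - w)
            ((z : EuclideanSpace ℂ (Fin n)) - u) := by
      have hu := herm_self u
      rw [herm_eq_inner] at hu
      simp only [herm_eq_inner, inner_sub_left, inner_sub_right]
      rw [hu]
      ring
    have hE : ‖@inner ℂ _ _ ((u : EuclideanSpace ℂ (Fin n)) - w)
        ((z : EuclideanSpace ℂ (Fin n)) - u)‖ ≤ 2 * a * b := by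
      have hcs := norm_inner_le_norm (𝕜 := ℂ) ((u : EuclideanSpace ℂ (Fin n)) - w)
        ((z : EuclideanSpace ℂ (Fin n)) - u)
      have h1 := norm_sub_le_sqrt_two_kdist u w
      have h2 := norm_sub_le_sqrt_two_kdist z u
      have hmul : ‖(u : EuclideanSpace ℂ (Fin n)) - w‖ * ‖(z : EuclideanSpace ℂ (Fin n)) - u‖
          ≤ (Real.sqrt 2 * b) * (Real.sqrt 2 * a) :=
        mul_le_mul h1 h2 (norm_nonneg _) (by positivity)
      have hsq : Real.sqrt 2 * Real.sqrt 2 = 2 := Real.mul_self_sqrt (by norm_num)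
      have heq : Real.sqrt 2 * b * (Real.sqrt 2 * a) = 2 * a * b := by
        rw [show Real.sqrt 2 * b * (Real.sqrt 2 * a)
            = (Real.sqrt 2 * Real.sqrt 2) * (a * b) by ring, hsq]
        ring
      linarith
    have habs : ‖1 - herm (z : EuclideanSpace ℂ (Fin n)) w‖ ≤ (a + b) ^ 2 := by
      calc ‖1 - herm (z : EuclideanSpace ℂ (Fin n)) w‖
          ≤ ‖1 - herm (z : EuclideanSpace ℂ (Fin n)) u‖
            + ‖1 - herm (u : EuclideanSpace ℂ (Fin n)) w‖
            + ‖@inner ℂ _ _ ((u : EuclideanSpace ℂ (Fin n)) - w)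
                ((z : EuclideanSpace ℂ (Fin n)) - u)‖ := by
            rw [key]
            exact le_trans (norm_add_le _ _)
              (add_le_add_left (norm_add_le _ _) _)
      _ ≤ a ^ 2 + b ^ 2 + 2 * a * b := by rw [ha2, hb2]; linarith
      _ = (a + b) ^ 2 := by ring
    calc kdist z w = Real.sqrt (‖1 - herm (z : EuclideanSpace ℂ (Fin n)) w‖) := rfl
      _ ≤ Real.sqrt ((a + b) ^ 2) := Real.sqrt_le_sqrt habs
      _ = a + b := Real.sqrt_sq (by positivity)
end
end
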